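/- For each (i,j) ∈ {2, …, n+1} × {1, …, n+1}, Cof_{i,j}[A_n] = (M_{i−1}^n/(β_{i−1} − r_{j−1}))·Cof_{1,j}[A_n]. -/

import Mathlib

open Finset Matrix

/-- The (i,j) cofactor of a square matrix: (−1)^(i+j) times the determinant of the
submatrix obtained by deleting row `i` and column `j`. -/
noncomputable def cof {n : ℕ} (M : Matrix (Fin (n + 1)) (Fin (n + 1)) ℝ)
    (i j : Fin (n + 1)) : ℝ :=
  (-1 : ℝ) ^ ((i : ℕ) + (j : ℕ)) * (M.submatrix i.succAbove j.succAbove).det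

noncomputable def offp : ∀ {m : ℕ}, (Fin m → ℝ) → ℝ
  | 0, _ => 1
  | (m+1), x => (∏ k : Fin m, (x k.succ - x 0)) * offp (fun k : Fin m => x k.succ)

lemma offp_succ {m : ℕ} (x : Fin (m+1) → ℝ) :
    offp x = (∏ k : Fin m, (x k.succ - x 0)) * offp (fun k : Fin m => x k.succ) := rfl

private lemma key1 (x y xi yj : ℝ) (hij : xi - yj ≠ 0) (hi0 : xi - y ≠ 0) (h0j : x - yj ≠ 0)
    (h00 : x - y ≠ 0) :
    (xi - yj)⁻¹ = (xi - y)⁻¹ * (((x - y) * (x - yj)⁻¹) *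
      (1 + (x - xi) * (yj - y) * ((x - y) * (xi - yj))⁻¹)) := by
  field_simp; ring

lemma cauchy_det : ∀ (m : ℕ) (x y : Fin m → ℝ), (∀ i j, x i ≠ y j) →
    Matrix.det (Matrix.of fun i j => (x i - y j)⁻¹) =
      offp x * offp (fun j => -(y j)) * (∏ i, ∏ j, (x i - y j))⁻¹ := by
  intro m
  induction m with
  | zero => intro x y _; simp [offp, Matrix.det_fin_zero]
  | succ m ih =>
    intro x y h
    have hij : ∀ i j, x i - y j ≠ 0 := fun i j => sub_ne_zero.mpr (h i j)
    have h00 : x 0 - y 0 ≠ 0 := hij 0 0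
    set B : Matrix (Fin (m+1)) (Fin (m+1)) ℝ :=
      Matrix.of (fun i j => 1 + (x 0 - x i) * (y j - y 0) * ((x 0 - y 0) * (x i - y j))⁻¹) with hB
    have step1 : Matrix.det (Matrix.of fun i j => (x i - y j)⁻¹) =
        (∏ i, (x i - y 0)⁻¹) * ((∏ j, (x 0 - y 0) * (x 0 - y j)⁻¹) * Matrix.det B) := by
      have e : (Matrix.of fun i j => (x i - y j)⁻¹) =
          Matrix.of (fun i j => (x i - y 0)⁻¹ *
            Matrix.of (fun i' j' => ((x 0 - y 0) * (x 0 - y j')⁻¹) * B i' j') i j) := by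
        ext i j
        simp only [Matrix.of_apply, hB]
        exact key1 _ _ _ _ (hij i j) (hij i 0) (hij 0 j) h00
      rw [e, Matrix.det_mul_column, Matrix.det_mul_row]
    -- row operations: subtract row 0
    set B' : Matrix (Fin (m+1)) (Fin (m+1)) ℝ :=
      Matrix.of (fun i j => if i = 0 then 1 else
        (x 0 - x i) * (y j - y 0) * ((x 0 - y 0) * (x i - y j))⁻¹) with hB'
    have step2 : Matrix.det B = Matrix.det B' := by
      apply Matrix.det_eq_of_forall_row_eq_smul_add_const
        (fun i => if i = 0 then 0 else 1) 0 (by simp)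
      intro i j
      by_cases hi : i = 0
      · simp [hB, hB', hi]
      · simp [hB, hB', hi]
        ring
    have step3 : Matrix.det B' =
        Matrix.det (Matrix.of (fun i j : Fin m =>
          (x 0 - x i.succ) * (y j.succ - y 0) * ((x 0 - y 0) * (x i.succ - y j.succ))⁻¹)) := by
      rw [Matrix.det_succ_column_zero, Fin.sum_univ_succ]
      rw [Finset.sum_eq_zero (by intro z _; simp [hB', Fin.succ_ne_zero, sub_self]), add_zero]
      simp only [hB', Matrix.of_apply, Matrix.submatrix_apply, Fin.val_zero, pow_zero, one_mul,
        Fin.succAbove_zero, if_pos rfl]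
      rw [if_pos trivial, one_mul]
      congr 1
    have step4 : Matrix.det (Matrix.of (fun i j : Fin m =>
          (x 0 - x i.succ) * (y j.succ - y 0) * ((x 0 - y 0) * (x i.succ - y j.succ))⁻¹)) =
        (∏ i : Fin m, (x i.succ - x 0)) * ((∏ j : Fin m, (y 0 - y j.succ) * (x 0 - y 0)⁻¹) *
          Matrix.det (Matrix.of (fun i j : Fin m => (x i.succ - y j.succ)⁻¹))) := by
      have e : (Matrix.of (fun i j : Fin m =>
            (x 0 - x i.succ) * (y j.succ - y 0) * ((x 0 - y 0) * (x i.succ - y j.succ))⁻¹)) =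
          Matrix.of (fun i j : Fin m => (x i.succ - x 0) *
            Matrix.of (fun i' j' : Fin m => ((y 0 - y j'.succ) * (x 0 - y 0)⁻¹) *
              (x i'.succ - y j'.succ)⁻¹) i j) := by
        ext i j
        simp only [Matrix.of_apply, mul_inv]
        ring
      rw [e, Matrix.det_mul_column]
      exact congrArg _ (Matrix.det_mul_row _ _)
    rw [step1, step2, step3, step4,
      ih (fun k => x k.succ) (fun k => y k.succ) (fun i j => h i.succ j.succ),
      offp_succ x, offp_succ (fun j => -(y j))]
    have s2 : (∏ k : Fin m, ((fun j => -(y j)) k.succ - (fun j => -(y j)) 0)) =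
        ∏ k : Fin m, (y 0 - y k.succ) := by
      apply Finset.prod_congr rfl; intros; ring
    rw [s2]
    have hA : x 0 - y 0 ≠ 0 := h00
    have hP : (∏ k : Fin m, (x k.succ - y 0)) ≠ 0 :=
      Finset.prod_ne_zero_iff.mpr fun k _ => hij k.succ 0
    have hQ : (∏ k : Fin m, (x 0 - y k.succ)) ≠ 0 :=
      Finset.prod_ne_zero_iff.mpr fun k _ => hij 0 k.succ
    have hZ : (∏ i' : Fin m, ∏ j' : Fin m, (x i'.succ - y j'.succ)) ≠ 0 :=
      Finset.prod_ne_zero_iff.mpr fun i' _ => Finset.prod_ne_zero_iff.mpr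
        fun j' _ => hij i'.succ j'.succ
    simp only [Fin.prod_univ_succ, Finset.prod_mul_distrib, Finset.prod_inv_distrib,
      Finset.prod_const, Finset.card_univ, Fintype.card_fin]
    field_simp
    ring

lemma cauchy2 (m : ℕ) (x y : Fin m → ℝ) (h : ∀ i j, x i ≠ y j) :
    Matrix.det (Matrix.of fun i j => x i * (x i - y j)⁻¹) =
      (∏ i, x i) * (offp x * offp (fun j => -(y j)) * (∏ i, ∏ j, (x i - y j))⁻¹) := by
  have e : (Matrix.of fun i j => x i * (x i - y j)⁻¹) =
      Matrix.of (fun i j => x i * Matrix.of (fun i' j' => (x i' - y j')⁻¹) i j) := rfl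
  rw [e, Matrix.det_mul_column, cauchy_det m x y h]

lemma bordered_det (m : ℕ) (x : Fin m → ℝ) (y : Fin (m+1) → ℝ) (h : ∀ i j, x i ≠ y j) :
    Matrix.det (Matrix.of (Fin.cons (fun _ => (1:ℝ)) (fun i j => x i * (x i - y j)⁻¹))) =
      (-1)^m * (∏ i, x i) * (offp x * offp (fun j => -(y j)) *
        (∏ i, ∏ j, (x i - y j))⁻¹) := by
  have hij : ∀ i j, x i - y j ≠ 0 := fun i j => sub_ne_zero.mpr (h i j)
  set N : Matrix (Fin (m+1)) (Fin (m+1)) ℝ :=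
    Matrix.of (Fin.cons (fun _ => (1:ℝ)) (fun i j => x i * (x i - y j)⁻¹)) with hN
  set P : Matrix (Fin (m+1)) (Fin (m+1)) ℝ :=
    Matrix.of (Fin.cons (fun j => if j = 0 then (1:ℝ) else 0)
      (fun i j => if j = 0 then x i * (x i - y 0)⁻¹
        else x i * (y j - y 0) * ((x i - y j) * (x i - y 0))⁻¹)) with hP
  have step2 : Matrix.det N = Matrix.det P := by
    rw [← Matrix.det_transpose N, ← Matrix.det_transpose P]
    apply Matrix.det_eq_of_forall_row_eq_smul_add_const
      (fun j => if j = 0 then 0 else 1) 0 (by simp)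
    intro jj ii
    simp only [Matrix.transpose_apply, hN, hP, Matrix.of_apply]
    refine Fin.cases ?_ (fun i => ?_) ii <;> refine Fin.cases ?_ (fun jj' => ?_) jj <;>
      simp [Fin.succ_ne_zero]
    · have h1 := hij i 0
      have h2 := hij i jj'.succ
      field_simp
      ring
  have step3 : Matrix.det P =
      Matrix.det (Matrix.of (fun i j : Fin m =>
        x i * (y j.succ - y 0) * ((x i - y j.succ) * (x i - y 0))⁻¹)) := by
    rw [Matrix.det_succ_row_zero, Fin.sum_univ_succ]
    rw [Finset.sum_eq_zero (by intro z _; simp [hP, Fin.succ_ne_zero]), add_zero]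
    simp only [hP, Matrix.of_apply, Fin.cons_zero, if_pos rfl, Fin.val_zero, pow_zero, one_mul,
      Fin.succAbove_zero]
    rw [if_pos trivial, one_mul]
    congr 1
  have step4 : Matrix.det (Matrix.of (fun i j : Fin m =>
        x i * (y j.succ - y 0) * ((x i - y j.succ) * (x i - y 0))⁻¹)) =
      (∏ i : Fin m, (x i - y 0)⁻¹) * ((∏ j : Fin m, (y 0 - y j.succ) * (-1)) *
        Matrix.det (Matrix.of (fun i j : Fin m => x i * (x i - y j.succ)⁻¹))) := by
    have e : (Matrix.of (fun i j : Fin m =>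
          x i * (y j.succ - y 0) * ((x i - y j.succ) * (x i - y 0))⁻¹)) =
        Matrix.of (fun i j : Fin m => (x i - y 0)⁻¹ *
          Matrix.of (fun i' j' : Fin m => ((y 0 - y j'.succ) * (-1)) *
            (x i' * (x i' - y j'.succ)⁻¹)) i j) := by
      ext i j
      simp only [Matrix.of_apply, mul_inv]
      ring
    rw [e, Matrix.det_mul_column]
    exact congrArg _ (Matrix.det_mul_row _ _)
  rw [step2, step3, step4, cauchy2 m x (fun k => y k.succ) (fun i j => h i j.succ),
    offp_succ (fun j => -(y j))]
  have s2 : (∏ k : Fin m, ((fun j => -(y j)) k.succ - (fun j => -(y j)) 0)) =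
      ∏ k : Fin m, (y 0 - y k.succ) := by
    apply Finset.prod_congr rfl; intros; ring
  rw [s2]
  have hP0 : (∏ k : Fin m, (x k - y 0)) ≠ 0 :=
    Finset.prod_ne_zero_iff.mpr fun k _ => hij k 0
  have hZ : (∏ i : Fin m, ∏ j : Fin m, (x i - y j.succ)) ≠ 0 :=
    Finset.prod_ne_zero_iff.mpr fun i _ => Finset.prod_ne_zero_iff.mpr
      fun j _ => hij i j.succ
  simp only [Fin.prod_univ_succ, Finset.prod_mul_distrib, Finset.prod_inv_distrib,
    Finset.prod_const, Finset.card_univ, Fintype.card_fin]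
  field_simp

lemma offp_zero (x : Fin 0 → ℝ) : offp x = 1 := rfl

lemma offp_succAbove : ∀ (m : ℕ) (x : Fin (m+1) → ℝ) (p : Fin (m+1)),
    offp x = (∏ a : Fin m, (if p.succAbove a < p then x p - x (p.succAbove a)
      else x (p.succAbove a) - x p)) * offp (fun a => x (p.succAbove a)) := by
  intro m
  induction m with
  | zero =>
    intro x p
    simp [offp_succ, offp_zero]
  | succ m ihm =>
    intro x p
    refine Fin.cases ?_ (fun q => ?_) p
    · rw [offp_succ x]
      simp [Fin.succAbove_zero]
    · rw [offp_succ x, Fin.prod_univ_succAbove (fun k => x k.succ - x 0) q,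
        ihm (fun k => x k.succ) q,
        Fin.prod_univ_succ (fun a => if (q.succ).succAbove a < q.succ
          then x q.succ - x ((q.succ).succAbove a) else x ((q.succ).succAbove a) - x q.succ),
        offp_succ (fun a => x ((q.succ).succAbove a))]
      simp only [Fin.succ_succAbove_succ, Fin.succ_succAbove_zero, Fin.succ_lt_succ_iff,
        Fin.succ_pos, if_true]
      ring

lemma neg_one_pow_congr' {a b : ℕ} (h : a % 2 = b % 2) : (-1:ℝ)^a = (-1)^b := by
  conv_lhs => rw [← Nat.div_add_mod a 2]
  conv_rhs => rw [← Nat.div_add_mod b 2]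
  rw [pow_add, pow_add, pow_mul, pow_mul, h]
  norm_num

set_option maxRecDepth 8000 in
lemma prod_neg' (s : Finset ℕ) (f : ℕ → ℝ) :
    (∏ k ∈ s, -f k) = (-1)^s.card * ∏ k ∈ s, f k := by
  rw [← Finset.prod_const (-1:ℝ), ← Finset.prod_mul_distrib]
  exact Finset.prod_congr rfl fun k _ => by ring

theorem stmt3 (n : ℕ) (hn : 1 ≤ n) (β r : ℕ → ℝ)
    (hr0 : 0 < r 0)
    (hinter : ∀ k, 1 ≤ k → k ≤ n → r (k - 1) < β k ∧ β k < r k)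
    (A : Matrix (Fin (n + 1)) (Fin (n + 1)) ℝ)
    (hA : ∀ i j : Fin (n + 1), A i j = if (i : ℕ) = 0 then 1 else β i / (β i - r j))
    (M : ℕ → ℝ)
    (hM : ∀ i, 1 ≤ i → i ≤ n →
      M i = ((∏ k ∈ Finset.range i, (β i - r k)) * ∏ k ∈ Finset.Icc i n, (r k - β i)) /
        (β i * (∏ k ∈ Finset.Ico 1 i, (β i - β k)) * ∏ k ∈ Finset.Icc (i + 1) n, (β k - β i))) :
    ∀ i j : Fin (n + 1), 1 ≤ (i : ℕ) →
      cof A i j = (M i / (β i - r j)) * cof A 0 j := by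
  -- ordering facts
  have hrr : ∀ l, l ≤ n → ∀ k, k ≤ l → r k ≤ r l := by
    intro l
    induction l with
    | zero => intro _ k hk; interval_cases k; exact le_refl _
    | succ l ihl =>
      intro hl k hk
      have hstep : r l < r (l+1) := by
        have h1 := hinter (l+1) (by omega) (by omega)
        simp only [Nat.add_sub_cancel] at h1
        linarith [h1.1, h1.2]
      rcases Nat.lt_succ_iff_lt_or_eq.mp (Nat.lt_succ_of_le hk) with h | h
      · exact le_trans (ihl (by omega) k (by omega)) (le_of_lt hstep)
      · rw [h]
  have hβr_lt : ∀ a k, 1 ≤ a → a ≤ n → a ≤ k → k ≤ n → β a < r k := by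
    intro a k ha1 han hak hkn
    exact lt_of_lt_of_le (hinter a ha1 han).2 (hrr k hkn a hak)
  have hrβ_lt : ∀ a k, 1 ≤ a → a ≤ n → k < a → r k < β a := by
    intro a k ha1 han hka
    exact lt_of_le_of_lt (hrr (a-1) (by omega) k (by omega)) (hinter a ha1 han).1
  have hβpos : ∀ a, 1 ≤ a → a ≤ n → 0 < β a := by
    intro a ha1 han
    exact lt_trans (lt_of_lt_of_le hr0 (hrr (a-1) (by omega) 0 (by omega)))
      (hinter a ha1 han).1
  have hββ : ∀ a b, 1 ≤ a → a < b → b ≤ n → β a < β b := by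
    intro a b ha1 hab hbn
    exact lt_of_lt_of_le (hinter a ha1 (by omega)).2
      (le_of_lt (lt_of_le_of_lt (hrr (b-1) (by omega) a (by omega)) (hinter b (by omega) hbn).1))
  have hβne_r : ∀ a k, 1 ≤ a → a ≤ n → k ≤ n → β a ≠ r k := by
    intro a k ha1 han hkn
    rcases le_or_gt a k with h | h
    · exact ne_of_lt (hβr_lt a k ha1 han h hkn)
    · exact ne_of_gt (hrβ_lt a k ha1 han h)
  obtain ⟨m, rfl⟩ : ∃ m, n = m + 1 := ⟨n - 1, by omega⟩
  intro i j hi1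
  have him : (i : ℕ) ≤ m + 1 := by omega
  set X : Fin (m+1) → ℝ := fun a => β ((a:ℕ) + 1) with hXdef
  set Y : Fin (m+1) → ℝ := fun b => r ((j.succAbove b : Fin (m+2)) : ℕ) with hYdef
  set i0 : Fin (m+1) := ⟨(i:ℕ) - 1, by omega⟩ with hi0def
  set X' : Fin m → ℝ := fun a => X (i0.succAbove a) with hX'def
  have hii0 : i = i0.succ := by
    apply Fin.ext
    simp [hi0def]
    omega
  have hi0v : ((i0:ℕ)) = (i:ℕ) - 1 := rfl
  have hYle : ∀ b, ((j.succAbove b : Fin (m+2)) : ℕ) ≤ m + 1 := fun b => Fin.is_le _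
  have hXY : ∀ a b, X a ≠ Y b := by
    intro a b
    exact hβne_r _ _ (by omega) (by have := a.isLt; omega) (hYle b)
  have hX'Y : ∀ a b, X' a ≠ Y b := fun a b => hXY _ _
  -- minor identification for row 0
  have hM0 : A.submatrix ((0:Fin (m+2)).succAbove) (j.succAbove) =
      Matrix.of (fun a b => X a * (X a - Y b)⁻¹) := by
    ext a b
    simp only [Matrix.submatrix_apply, Fin.succAbove_zero, Matrix.of_apply]
    rw [hA]
    simp only [Fin.val_succ, Nat.succ_ne_zero, if_false, hXdef, hYdef]
    rw [div_eq_mul_inv]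
  -- minor identification for row i
  have hMi : A.submatrix (i.succAbove) (j.succAbove) =
      Matrix.of (Fin.cons (fun _ => (1:ℝ)) (fun a b => X' a * (X' a - Y b)⁻¹)) := by
    ext a b
    refine Fin.cases ?_ (fun c => ?_) a
    · simp only [Matrix.submatrix_apply, hii0, Fin.succ_succAbove_zero, Matrix.of_apply,
        Fin.cons_zero]
      rw [hA]
      simp
    · simp only [Matrix.submatrix_apply, hii0, Fin.succ_succAbove_succ, Matrix.of_apply,
        Fin.cons_succ]
      rw [hA]
      simp only [Fin.val_succ, Nat.succ_ne_zero, if_false, hX'def, hXdef, hYdef]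
      rw [div_eq_mul_inv]
  have c0 : cof A 0 j = (-1:ℝ)^(j:ℕ) * ((∏ a, X a) *
      (offp X * offp (fun b => -(Y b)) * (∏ a, ∏ b, (X a - Y b))⁻¹)) := by
    unfold cof
    rw [hM0, cauchy2 _ _ _ hXY]
    norm_num
  have ci : cof A i j = (-1:ℝ)^((i:ℕ)+(j:ℕ)) * ((-1)^m * (∏ a, X' a) *
      (offp X' * offp (fun b => -(Y b)) * (∏ a, ∏ b, (X' a - Y b))⁻¹)) := by
    unfold cof
    rw [hMi, bordered_det m X' Y hX'Y]
  have hXi0 : X i0 = β ↑i := by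
    show β ((i0:ℕ) + 1) = β ↑i
    congr 1
    omega
  have hMval : M ↑i = ((∏ k ∈ Finset.range (i:ℕ), (β ↑i - r k)) *
      ∏ k ∈ Finset.Icc (i:ℕ) (m+1), (r k - β ↑i)) /
      (β ↑i * (∏ k ∈ Finset.Ico 1 (i:ℕ), (β ↑i - β k)) *
        ∏ k ∈ Finset.Icc ((i:ℕ)+1) (m+1), (β k - β ↑i)) := hM ↑i (by omega) (by omega)
  have RA : (∏ a, X a) = β ↑i * ∏ a, X' a := by
    rw [Fin.prod_univ_succAbove X i0, hXi0]
  have RC : (∏ a, ∏ b, (X a - Y b)) = (∏ b, (β ↑i - Y b)) * (∏ a, ∏ b, (X' a - Y b)) := by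
    rw [Fin.prod_univ_succAbove (fun a => ∏ b, (X a - Y b)) i0]
    congr 1
    · exact Finset.prod_congr rfl fun b _ => by rw [hXi0]
  have RW' : (β ↑i - r ↑j) * (∏ b, (β ↑i - Y b)) = ∏ k : Fin (m+2), (β ↑i - r (k:ℕ)) := by
    rw [Fin.prod_univ_succAbove (fun k : Fin (m+2) => β ↑i - r (k:ℕ)) j]
  have RP : (∏ k : Fin (m+2), (β ↑i - r (k:ℕ))) =
      (∏ k ∈ Finset.range (i:ℕ), (β ↑i - r k)) *
        ((-1)^(m+2-(i:ℕ)) * ∏ k ∈ Finset.Icc (i:ℕ) (m+1), (r k - β ↑i)) := by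
    rw [Fin.prod_univ_eq_prod_range (fun k => β ↑i - r k) (m+2), Finset.range_eq_Ico,
      ← Finset.prod_Ico_consecutive _ (Nat.zero_le (i:ℕ)) (by omega : (i:ℕ) ≤ m+2)]
    congr 1
    · rw [Finset.range_eq_Ico]
    rw [Finset.prod_congr rfl (fun k _ => show β ↑i - r k = -(r k - β ↑i) by ring),
      prod_neg', Nat.card_Ico, ← Finset.Ico_add_one_right_eq_Icc]
    rfl
  -- the off-diagonal product split
  have hsa : ∀ a : Fin m, ((i0.succAbove a : Fin (m+1)) : ℕ) =
      if ((a:ℕ) < (i:ℕ)-1) then (a:ℕ) else (a:ℕ)+1 := by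
    intro a
    rcases lt_or_ge ((a:ℕ)) ((i:ℕ)-1) with hc | hc
    · rw [Fin.succAbove_of_castSucc_lt _ _ (by rw [Fin.lt_def]; simpa using hc)]
      simp [hc]
    · rw [Fin.succAbove_of_le_castSucc _ _ (by rw [Fin.le_def]; simpa [hi0v] using hc)]
      simp [Fin.val_succ, Nat.not_lt.mpr hc]
  have hfac : ∀ a : Fin m,
      (if i0.succAbove a < i0 then X i0 - X (i0.succAbove a) else X (i0.succAbove a) - X i0) =
      (fun k : ℕ => if k < (i:ℕ)-1 then β ↑i - β (k+1) else β (k+2) - β ↑i) ((a:ℕ)) := by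
    intro a
    rcases lt_or_ge ((a:ℕ)) ((i:ℕ)-1) with hc | hc
    · have hlt : i0.succAbove a < i0 := by
        rw [Fin.lt_def, hsa a, if_pos hc]
        exact hc
      rw [if_pos hlt]
      simp only [hXdef, hsa a, if_pos hc]
      rw [show (i:ℕ)-1+1 = (i:ℕ) by omega]
    · have hlt : ¬ (i0.succAbove a < i0) := by
        rw [Fin.lt_def, hsa a, if_neg (Nat.not_lt.mpr hc)]
        show ¬ ((a:ℕ)+1 < (i:ℕ)-1)
        omega
      rw [if_neg hlt]
      simp only [hXdef, hsa a, if_neg (Nat.not_lt.mpr hc), if_neg (by omega : ¬ ((a:ℕ) < (i:ℕ)-1))]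
      rw [show (i:ℕ)-1+1 = (i:ℕ) by omega, show (a:ℕ)+1+1 = (a:ℕ)+2 by omega]
  have RQ : offp X = ((∏ k ∈ Finset.Ico 1 (i:ℕ), (β ↑i - β k)) *
      ∏ k ∈ Finset.Icc ((i:ℕ)+1) (m+1), (β k - β ↑i)) * offp X' := by
    rw [offp_succAbove m X i0]
    congr 1
    rw [Finset.prod_congr rfl (fun a _ => hfac a),
      Fin.prod_univ_eq_prod_range (fun k : ℕ => if k < (i:ℕ)-1 then β ↑i - β (k+1) else β (k+2) - β ↑i) m,
      Finset.range_eq_Ico,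
      ← Finset.prod_Ico_consecutive _ (Nat.zero_le ((i:ℕ)-1)) (by omega : (i:ℕ)-1 ≤ m)]
    congr 1
    · rw [Finset.prod_Ico_eq_prod_range, Finset.prod_Ico_eq_prod_range]
      apply Finset.prod_congr (by congr 1 <;> omega)
      intro k hk
      simp only [Finset.mem_range] at hk
      rw [if_pos (by omega)]
      congr 2
      omega
    · rw [show Finset.Icc ((i:ℕ)+1) (m+1) = Finset.Ico ((i:ℕ)+1) (m+2) by
        ext k; simp [Finset.mem_Icc, Finset.mem_Ico]; omega]
      rw [Finset.prod_Ico_eq_prod_range, Finset.prod_Ico_eq_prod_range]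
      apply Finset.prod_congr (by congr 1 <;> omega)
      intro k hk
      simp only [Finset.mem_range] at hk
      rw [if_neg (by omega)]
      congr 2
      omega
  -- nonzero facts
  have hβine : β ↑i ≠ 0 := ne_of_gt (hβpos ↑i (by omega) (by omega))
  have hQLne : (∏ k ∈ Finset.Ico 1 (i:ℕ), (β ↑i - β k)) ≠ 0 := by
    apply Finset.prod_ne_zero_iff.mpr
    intro k hk
    simp only [Finset.mem_Ico] at hk
    exact sub_ne_zero.mpr (ne_of_gt (hββ k ↑i hk.1 hk.2 (by omega)))
  have hQRne : (∏ k ∈ Finset.Icc ((i:ℕ)+1) (m+1), (β k - β ↑i)) ≠ 0 := by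
    apply Finset.prod_ne_zero_iff.mpr
    intro k hk
    simp only [Finset.mem_Icc] at hk
    exact sub_ne_zero.mpr (ne_of_gt (hββ ↑i k (by omega) (by omega) (by omega)))
  have hbrj : β ↑i - r ↑j ≠ 0 :=
    sub_ne_zero.mpr (hβne_r ↑i ↑j (by omega) (by omega) (by exact Fin.is_le j))
  have hWne : (∏ b, (β ↑i - Y b)) ≠ 0 :=
    Finset.prod_ne_zero_iff.mpr fun b _ =>
      sub_ne_zero.mpr (hβne_r ↑i _ (by omega) (by omega) (hYle b))
  have hZ'ne : (∏ a, ∏ b, (X' a - Y b)) ≠ 0 :=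
    Finset.prod_ne_zero_iff.mpr fun a _ => Finset.prod_ne_zero_iff.mpr fun b _ =>
      sub_ne_zero.mpr (hX'Y a b)
  -- combine PL*PR
  have hsq : ((-1:ℝ)^(m+2-(i:ℕ))) * ((-1:ℝ)^(m+2-(i:ℕ))) = 1 := by
    rw [← pow_add]
    exact Even.neg_one_pow ⟨m+2-(i:ℕ), rfl⟩
  have hPP : (∏ k ∈ Finset.range (i:ℕ), (β ↑i - r k)) *
      (∏ k ∈ Finset.Icc (i:ℕ) (m+1), (r k - β ↑i)) =
      (-1:ℝ)^((i:ℕ)+m) * ((β ↑i - r ↑j) * (∏ b, (β ↑i - Y b))) := by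
    have h1 : (∏ k ∈ Finset.range (i:ℕ), (β ↑i - r k)) *
        ((-1:ℝ)^(m+2-(i:ℕ)) * ∏ k ∈ Finset.Icc (i:ℕ) (m+1), (r k - β ↑i)) =
        (β ↑i - r ↑j) * (∏ b, (β ↑i - Y b)) := by rw [← RP, ← RW']
    have epar : ((-1:ℝ)^(m+2-(i:ℕ))) = (-1:ℝ)^((i:ℕ)+m) := neg_one_pow_congr' (by omega)
    calc (∏ k ∈ Finset.range (i:ℕ), (β ↑i - r k)) * (∏ k ∈ Finset.Icc (i:ℕ) (m+1), (r k - β ↑i))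
        = (((-1:ℝ)^(m+2-(i:ℕ))) * ((-1:ℝ)^(m+2-(i:ℕ)))) *
          ((∏ k ∈ Finset.range (i:ℕ), (β ↑i - r k)) * (∏ k ∈ Finset.Icc (i:ℕ) (m+1), (r k - β ↑i))) := by
          rw [hsq, one_mul]
      _ = ((-1:ℝ)^(m+2-(i:ℕ))) * ((∏ k ∈ Finset.range (i:ℕ), (β ↑i - r k)) *
          ((-1:ℝ)^(m+2-(i:ℕ)) * ∏ k ∈ Finset.Icc (i:ℕ) (m+1), (r k - β ↑i))) := by ring
      _ = ((-1:ℝ)^(m+2-(i:ℕ))) * ((β ↑i - r ↑j) * (∏ b, (β ↑i - Y b))) := by rw [h1]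
      _ = (-1:ℝ)^((i:ℕ)+m) * ((β ↑i - r ↑j) * (∏ b, (β ↑i - Y b))) := by rw [epar]
  rw [ci, c0, hMval, RA, RQ, RC, hPP]
  field_simp
  ring
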